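/- For E > 0 define T(E) = 2∫_{−√(2E)}^{√(2E)} (E + 1 − x²/2) / √((E + 1 − x²/2)² − 1) dx. Then T is monotonically increasing on (0, +∞): for all E₁, E₂ with 0 < E₁ ≤ E₂ one has T(E₁) ≤ T(E₂). -/
import Mathlib


/-- The period function of the normalized relativistic harmonic oscillator. -/
noncomputable def Trel (E : ℝ) : ℝ :=
  2 * ∫ x in (-Real.sqrt (2 * E))..(Real.sqrt (2 * E)),
        (E + 1 - x ^ 2 / 2) / Real.sqrt ((E + 1 - x ^ 2 / 2) ^ 2 - 1)

/-- The normalized integrand after the substitution `x = √(2E) s`. -/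
noncomputable def grel (E s : ℝ) : ℝ :=
  (1 + E * (1 - s ^ 2)) / (Real.sqrt (1 - s ^ 2) * Real.sqrt (2 + E * (1 - s ^ 2)))

lemma grel_nonneg (E s : ℝ) (hE : 0 < E) (hs : s ^ 2 ≤ 1) : 0 ≤ grel E s := by
  apply div_nonneg
  · nlinarith
  · positivity

lemma pointwise_eq (E s : ℝ) (hE : 0 < E) (hs : s ^ 2 ≤ 1) :
    Real.sqrt (2 * E) *
      ((E + 1 - (Real.sqrt (2 * E) * s) ^ 2 / 2) /
        Real.sqrt ((E + 1 - (Real.sqrt (2 * E) * s) ^ 2 / 2) ^ 2 - 1)) =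
    Real.sqrt 2 * grel E s := by
  have ha2 : (Real.sqrt (2 * E)) ^ 2 = 2 * E := Real.sq_sqrt (by positivity)
  have hw : 0 ≤ E * (1 - s ^ 2) := by nlinarith
  have e1 : E + 1 - (Real.sqrt (2 * E) * s) ^ 2 / 2 = 1 + E * (1 - s ^ 2) := by
    rw [mul_pow, ha2]; ring
  rw [e1]
  have e2 : (1 + E * (1 - s ^ 2)) ^ 2 - 1 = (E * (1 - s ^ 2)) * (2 + E * (1 - s ^ 2)) := by
    ring
  rw [e2, Real.sqrt_mul hw, Real.sqrt_mul hE.le, Real.sqrt_mul (by norm_num : (0:ℝ) ≤ 2) E]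
  have h1 : Real.sqrt E ≠ 0 := by positivity
  unfold grel
  have key := mul_div_mul_left ((1:ℝ) + E * (1 - s ^ 2))
    (Real.sqrt (1 - s ^ 2) * Real.sqrt (2 + E * (1 - s ^ 2))) h1
  linear_combination Real.sqrt 2 * key

lemma trel_eq (E : ℝ) (hE : 0 < E) :
    Trel E = 2 * Real.sqrt 2 * ∫ s in (-1:ℝ)..1, grel E s := by
  have h := intervalIntegral.smul_integral_comp_mul_left
    (fun x => (E + 1 - x ^ 2 / 2) / Real.sqrt ((E + 1 - x ^ 2 / 2) ^ 2 - 1))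
    (a := -1) (b := 1) (Real.sqrt (2 * E))
  simp only [mul_one, mul_neg_one] at h
  have h2 : Trel E = 2 * (Real.sqrt (2 * E) • ∫ s in (-1:ℝ)..1,
      (fun x => (E + 1 - x ^ 2 / 2) / Real.sqrt ((E + 1 - x ^ 2 / 2) ^ 2 - 1))
        (Real.sqrt (2 * E) * s)) := by
    rw [h]; rfl
  rw [h2, smul_eq_mul, ← intervalIntegral.integral_const_mul]
  rw [intervalIntegral.integral_congr (g := fun s => Real.sqrt 2 * grel E s)]
  · rw [intervalIntegral.integral_const_mul]; ring
  · intro s hs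
    rw [Set.uIcc_of_le (by norm_num : (-1:ℝ) ≤ 1)] at hs
    have hs2 : s ^ 2 ≤ 1 := by nlinarith [hs.1, hs.2]
    exact pointwise_eq E s hE hs2

lemma grel_mono (E₁ E₂ s : ℝ) (h1 : 0 < E₁) (h12 : E₁ ≤ E₂) (hs : s ^ 2 ≤ 1) :
    grel E₁ s ≤ grel E₂ s := by
  set w₁ := E₁ * (1 - s ^ 2) with hw₁
  set w₂ := E₂ * (1 - s ^ 2) with hw₂
  have hs0 : 0 ≤ 1 - s ^ 2 := by linarith
  have hw1 : 0 ≤ w₁ := by positivity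
  have hww : w₁ ≤ w₂ := by nlinarith
  have hw2 : 0 ≤ w₂ := le_trans hw1 hww
  rcases eq_or_lt_of_le hs0 with h | h
  · -- s² = 1 : both sides zero
    unfold grel
    rw [← hw₁, ← hw₂, ← h]
    simp
  · unfold grel
    rw [← hw₁, ← hw₂]
    have ht : 0 < Real.sqrt (1 - s ^ 2) := Real.sqrt_pos.2 h
    have hp1 : 0 < Real.sqrt (2 + w₁) := Real.sqrt_pos.2 (by linarith)
    have hp2 : 0 < Real.sqrt (2 + w₂) := Real.sqrt_pos.2 (by linarith)
    rw [div_le_div_iff₀ (by positivity) (by positivity)]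
    have key : (1 + w₁) * Real.sqrt (2 + w₂) ≤ (1 + w₂) * Real.sqrt (2 + w₁) := by
      have e1 : (1 + w₁) * Real.sqrt (2 + w₂) = Real.sqrt ((1 + w₁) ^ 2 * (2 + w₂)) := by
        rw [Real.sqrt_mul (by positivity), Real.sqrt_sq (by linarith)]
      have e2 : (1 + w₂) * Real.sqrt (2 + w₁) = Real.sqrt ((1 + w₂) ^ 2 * (2 + w₁)) := by
        rw [Real.sqrt_mul (by positivity), Real.sqrt_sq (by linarith)]
      rw [e1, e2]
      apply Real.sqrt_le_sqrt
      nlinarith [mul_nonneg hw1 hw2, mul_nonneg (mul_nonneg hw1 hw2) (sub_nonneg.2 hww)]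
    calc (1 + w₁) * (Real.sqrt (1 - s ^ 2) * Real.sqrt (2 + w₂))
        = Real.sqrt (1 - s ^ 2) * ((1 + w₁) * Real.sqrt (2 + w₂)) := by ring
      _ ≤ Real.sqrt (1 - s ^ 2) * ((1 + w₂) * Real.sqrt (2 + w₁)) :=
          mul_le_mul_of_nonneg_left key ht.le
      _ = (1 + w₂) * (Real.sqrt (1 - s ^ 2) * Real.sqrt (2 + w₁)) := by ring

lemma grel_integrable (E : ℝ) (hE : 0 < E) :
    IntervalIntegrable (grel E) MeasureTheory.volume (-1) 1 := by
  have hbound : IntervalIntegrable (fun s : ℝ =>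
      (1 + E) / Real.sqrt 2 * ((1 - s) ^ (-(1/2) : ℝ) + (1 + s) ^ (-(1/2) : ℝ)))
      MeasureTheory.volume (-1) 1 := by
    apply IntervalIntegrable.const_mul
    apply IntervalIntegrable.add
    · have := (intervalIntegral.intervalIntegrable_rpow' (a := 2) (b := 0)
        (r := -(1/2)) (by norm_num)).comp_sub_left 1
      norm_num at this
      exact this
    · have := (intervalIntegral.intervalIntegrable_rpow' (a := 0) (b := 2)
        (r := -(1/2)) (by norm_num)).comp_add_left 1
      norm_num at this
      exact this
  apply hbound.mono_fun
  · apply Measurable.aestronglyMeasurable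
    unfold grel
    fun_prop
  · filter_upwards [MeasureTheory.ae_restrict_mem measurableSet_uIoc] with s hs
    rw [Set.uIoc_of_le (by norm_num : (-1:ℝ) ≤ 1)] at hs
    obtain ⟨hs1, hs2⟩ := hs
    have h1s : 0 ≤ 1 - s := by linarith
    have h1s' : 0 ≤ 1 + s := by linarith
    have hs2' : s ^ 2 ≤ 1 := by nlinarith
    have hg0 : 0 ≤ grel E s := grel_nonneg E s hE hs2'
    set p := Real.sqrt (1 - s) with hp_def
    set q := Real.sqrt (1 + s) with hq_def
    have hpnn : 0 ≤ p := Real.sqrt_nonneg _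
    have hqpos : 0 < q := Real.sqrt_pos.2 (by linarith)
    have hr1 : (1 - s) ^ (-(1/2) : ℝ) = p⁻¹ := by
      rw [Real.rpow_neg h1s, ← Real.sqrt_eq_rpow]
    have hr2 : (1 + s) ^ (-(1/2) : ℝ) = q⁻¹ := by
      rw [Real.rpow_neg h1s', ← Real.sqrt_eq_rpow]
    have hkey : grel E s ≤ (1 + E) / Real.sqrt 2 * (p⁻¹ + q⁻¹) := by
      rcases eq_or_lt_of_le h1s with h | hppos'
      · -- s = 1, grel = 0
        have : grel E s = 0 := by
          unfold grel
          have : (1:ℝ) - s ^ 2 = 0 := by nlinarith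
          rw [this]
          simp
        rw [this]
        positivity
      · have hppos : 0 < p := Real.sqrt_pos.2 hppos'
        have hfac : Real.sqrt (1 - s ^ 2) = p * q := by
          rw [hp_def, hq_def, ← Real.sqrt_mul h1s]
          norm_num
          ring_nf
        have hwE : E * (1 - s ^ 2) ≤ E := by nlinarith
        have hw0 : 0 ≤ E * (1 - s ^ 2) := by nlinarith
        have hpq1 : 1 ≤ p + q := by
          have e1 : p ^ 2 = 1 - s := Real.sq_sqrt h1s
          have e2 : q ^ 2 = 1 + s := Real.sq_sqrt h1s'
          nlinarith [mul_nonneg hpnn hqpos.le]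
        have hinv : (p * q)⁻¹ ≤ p⁻¹ + q⁻¹ := by
          have heq : p⁻¹ + q⁻¹ - (p * q)⁻¹ = (p + q - 1) * (p⁻¹ * q⁻¹) := by
            field_simp
            ring
          have h0 : 0 ≤ (p + q - 1) * (p⁻¹ * q⁻¹) :=
            mul_nonneg (by linarith) (by positivity)
          linarith
        calc grel E s = (1 + E * (1 - s ^ 2)) /
              (p * q * Real.sqrt (2 + E * (1 - s ^ 2))) := by
              unfold grel; rw [hfac]
          _ ≤ (1 + E) / (p * q * Real.sqrt 2) := by
              apply div_le_div₀ (by linarith) (by linarith) (by positivity)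
              have : Real.sqrt 2 ≤ Real.sqrt (2 + E * (1 - s ^ 2)) :=
                Real.sqrt_le_sqrt (by linarith)
              nlinarith [mul_pos hppos hqpos]
          _ = (1 + E) / Real.sqrt 2 * (p * q)⁻¹ := by ring
          _ ≤ (1 + E) / Real.sqrt 2 * (p⁻¹ + q⁻¹) := by
              apply mul_le_mul_of_nonneg_left hinv (by positivity)
    rw [Real.norm_eq_abs, Real.norm_eq_abs, abs_of_nonneg hg0, hr1, hr2,
      abs_of_nonneg (by positivity)]
    exact hkey

theorem stmt14 : ∀ E₁ E₂ : ℝ, 0 < E₁ → E₁ ≤ E₂ → Trel E₁ ≤ Trel E₂ := by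
  intro E₁ E₂ h1 h12
  have h2 : 0 < E₂ := lt_of_lt_of_le h1 h12
  rw [trel_eq E₁ h1, trel_eq E₂ h2]
  have hsqrt2 : (0:ℝ) ≤ 2 * Real.sqrt 2 := by positivity
  apply mul_le_mul_of_nonneg_left _ hsqrt2
  apply intervalIntegral.integral_mono_on (by norm_num)
    (grel_integrable E₁ h1) (grel_integrable E₂ h2)
  intro s hs
  exact grel_mono E₁ E₂ s h1 h12 (by nlinarith [hs.1, hs.2])
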